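/- arXiv:1905.04933 — 2 statements merged into one kernel-verified Lean document; each statement's English description precedes it below -/
import Mathlib

section
/- Assume the Common Givens: P_i is a preference order on C consistent with Q; the query is the pair (c_j,c_k) with P_i(c_j,c_k); and neither (c_j,c_k) nor (c_k,c_j) belongs to Q. For every P' ∈ μ(P_i) there exists a candidate z ∈ [c_j, P_i, c_k] such that P' is exactly the following preference order, listed from most to least preferred: first the candidates of X_good = (∞, P_i, z) \ [c_j, Q, −∞] in the relative order of P_i; then the candidates of Y_bad = [z, P_i, −∞] ∩ (∞, Q, c_k) in the relative order of P_i; then c_k; then c_j; then the candidates of X_bad = (∞, P_i, z) ∩ (c_j, Q, −∞) in the relative order of P_i; and finally the candidates of Y_good = [z, P_i, −∞] \ [∞, Q, c_k] in the relative order of P_i. Here (∞, P_i, z) is the set of candidates strictly above z in P_i, [z, P_i, −∞] is z together with all candidates below z in P_i, (c_j, Q, −∞) is the set of candidates c' with (c_j,c') ∈ Q, [c_j, Q, −∞] is c_j together with that set, (∞, Q, c_k) is the set of candidates c' with (c',c_k) ∈ Q, and [∞, Q, c_k] is c_k together with that set. -/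
/-- A preference order: a strict total order on candidates. -/
def IsPref {C : Type*} (P : C → C → Prop) : Prop :=
  (∀ a b : C, a ≠ b → P a b ∨ P b a) ∧ (∀ a : C, ¬ P a a) ∧
    ∀ a b c : C, P a b → P b c → P a c

/-- The (closed) segment `[c, P, c']` of candidates between `c` and `c'`. -/
def seg {C : Type*} (P : C → C → Prop) (c c' : C) : Set C :=
  {d : C | (d = c ∨ P c d) ∧ (d = c' ∨ P d c')}

/-- `Q` is a strict partial order (consistent, transitively closed reported preferences). -/
def IsSPO {C : Type*} (Q : C → C → Prop) : Prop :=
  (∀ a : C, ¬ Q a a) ∧ ∀ a b c : C, Q a b → Q b c → Q a c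

/-- `P` is consistent with (extends) the reported preferences `Q`, written `P ⊨ Q`. -/
def Extends {C : Type*} (P Q : C → C → Prop) : Prop := ∀ a b : C, Q a b → P a b

/-- The swap distance between two preference orders: the number of (unordered) pairs of
candidates ordered differently, counted here as ordered pairs `(a, b)` with
`P a b` and `P' b a`. -/
noncomputable def dswap {C : Type*} [Fintype C] (P P' : C → C → Prop) : ℕ :=
  Set.ncard {p : C × C | P p.1 p.2 ∧ P' p.2 p.1}

/-- `P` is a preference order consistent with the transitive closure of `Q ∪ {(ck, cj)}`
(for a transitive total order this is the same as extending `Q` and putting `ck` above `cj`). -/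
def Feasible {C : Type*} (Q : C → C → Prop) (cj ck : C) (P : C → C → Prop) : Prop :=
  IsPref P ∧ Extends P Q ∧ P ck cj

/-- `P ∈ μ(Pi)`: among all preference orders consistent with the transitive closure of
`Q ∪ {(ck, cj)}`, `P` minimizes the swap distance to `Pi`. -/
def InMu {C : Type*} [Fintype C] (Q : C → C → Prop) (cj ck : C)
    (Pi P : C → C → Prop) : Prop :=
  Feasible Q cj ck P ∧ ∀ R : C → C → Prop, Feasible Q cj ck R → dswap Pi P ≤ dswap Pi R

open Classical in
/-- The block index of candidate `d` in the order
`(X_good, Y_bad, c_k, c_j, X_bad, Y_good)` built around the pivot `z`: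
`X_good = (∞, Pi, z) \ [cj, Q, −∞]`, `Y_bad = [z, Pi, −∞] ∩ (∞, Q, ck)`,
then `ck`, then `cj`, `X_bad = (∞, Pi, z) ∩ (cj, Q, −∞)`,
`Y_good = [z, Pi, −∞] \ [∞, Q, ck]`. -/
noncomputable def blk {C : Type*} (Q Pi : C → C → Prop) (cj ck z : C) (d : C) : ℕ :=
  if Pi d z ∧ ¬ (d = cj ∨ Q cj d) then 0
  else if (d = z ∨ Pi z d) ∧ Q d ck then 1
  else if d = ck then 2
  else if d = cj then 3
  else if Pi d z ∧ Q cj d then 4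
  else if (d = z ∨ Pi z d) ∧ ¬ (d = ck ∨ Q d ck) then 5
  else 6

section Aux
variable {C : Type*}

lemma pref_asymm {P : C → C → Prop} (h : IsPref P) {a b : C} (hab : P a b) : ¬ P b a :=
  fun hba => h.2.1 a (h.2.2 a b a hab hba)

lemma pref_tricho {P : C → C → Prop} (h : IsPref P) (a b : C) : a = b ∨ P a b ∨ P b a := by
  by_cases hab : a = b
  · exact Or.inl hab
  · exact Or.inr (h.1 a b hab)

/-- order from a key function with ties broken by `Pi`. -/
def ordK (κ : C → ℕ) (Pi : C → C → Prop) (x y : C) : Prop :=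
  κ x < κ y ∨ (κ x = κ y ∧ Pi x y)

lemma isPref_ordK {Pi : C → C → Prop} (h : IsPref Pi) (κ : C → ℕ) : IsPref (ordK κ Pi) := by
  refine ⟨?_, ?_, ?_⟩
  · intro a b hab
    rcases lt_trichotomy (κ a) (κ b) with h1 | h1 | h1
    · exact Or.inl (Or.inl h1)
    · rcases h.1 a b hab with h2 | h2
      · exact Or.inl (Or.inr ⟨h1, h2⟩)
      · exact Or.inr (Or.inr ⟨h1.symm, h2⟩)
    · exact Or.inr (Or.inl h1)
  · intro a h1
    rcases h1 with h1 | h1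
    · omega
    · exact h.2.1 a h1.2
  · intro a b c h1 h2
    rcases h1 with h1 | h1 <;> rcases h2 with h2 | h2
    · exact Or.inl (h1.trans h2)
    · exact Or.inl (h2.1 ▸ h1)
    · exact Or.inl (h1.1 ▸ h2)
    · exact Or.inr ⟨h1.1.trans h2.1, h.2.2 a b c h1.2 h2.2⟩

lemma pref_ext {P R : C → C → Prop} (hP : IsPref P) (hR : IsPref R)
    (h : ∀ a b, R a b → P a b) : ∀ a b, P a b ↔ R a b := by
  intro a b
  constructor
  · intro hab
    have hne : a ≠ b := fun he => hP.2.1 a (he ▸ hab)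
    rcases hR.1 a b hne with h1 | h1
    · exact h1
    · exact absurd (h _ _ h1) (pref_asymm hP hab)
  · exact h a b

lemma exists_pref_max [Fintype C] {Pi : C → C → Prop} (h : IsPref Pi) {S : Set C}
    (hS : S.Nonempty) : ∃ z ∈ S, ∀ d ∈ S, ¬ Pi d z := by
  classical
  have hS' : S.toFinset.Nonempty := by rwa [Set.toFinset_nonempty]
  obtain ⟨z, hz, hmax⟩ := Finset.exists_max_image S.toFinset
    (fun d => (Finset.univ.filter (fun x => Pi d x)).card) hS'
  refine ⟨z, Set.mem_toFinset.mp hz, fun d hd hPi => ?_⟩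
  have hle := hmax d (Set.mem_toFinset.mpr hd)
  have hlt : (Finset.univ.filter (fun x => Pi z x)).card
      < (Finset.univ.filter (fun x => Pi d x)).card := by
    apply Finset.card_lt_card
    constructor
    · intro x hx
      simp only [Finset.mem_filter, Finset.mem_univ, true_and] at hx ⊢
      exact h.2.2 d z x hPi hx
    · intro hsub
      have hz' : z ∈ Finset.univ.filter (fun x => Pi d x) := by
        simp [hPi]
      have := hsub hz'
      simp only [Finset.mem_filter, Finset.mem_univ, true_and] at this
      exact h.2.1 z this
  omega

lemma exists_pref_min [Fintype C] {Pi : C → C → Prop} (h : IsPref Pi) {S : Set C}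
    (hS : S.Nonempty) : ∃ z ∈ S, ∀ d ∈ S, ¬ Pi z d := by
  classical
  have hS' : S.toFinset.Nonempty := by rwa [Set.toFinset_nonempty]
  obtain ⟨z, hz, hmin⟩ := Finset.exists_min_image S.toFinset
    (fun d => (Finset.univ.filter (fun x => Pi d x)).card) hS'
  refine ⟨z, Set.mem_toFinset.mp hz, fun d hd hPi => ?_⟩
  have hle := hmin d (Set.mem_toFinset.mpr hd)
  have hlt : (Finset.univ.filter (fun x => Pi d x)).card
      < (Finset.univ.filter (fun x => Pi z x)).card := by
    apply Finset.card_lt_card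
    constructor
    · intro x hx
      simp only [Finset.mem_filter, Finset.mem_univ, true_and] at hx ⊢
      exact h.2.2 z d x hPi hx
    · intro hsub
      have hd' : d ∈ Finset.univ.filter (fun x => Pi z x) := by
        simp [hPi]
      have := hsub hd'
      simp only [Finset.mem_filter, Finset.mem_univ, true_and] at this
      exact h.2.1 d this
  omega

end Aux
section Adj
variable {C : Type*} [Fintype C]

lemma adj_swap {Q Pi P' : C → C → Prop} (hPi : IsPref Pi) (hPiQ : Extends Pi Q)
    {cj ck : C} (hmu : InMu Q cj ck Pi P') :
    ∀ a b : C, P' a b → (∀ c, ¬ (P' a c ∧ P' c b)) → Pi a b ∨ (a = ck ∧ b = cj) := by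
  obtain ⟨⟨hP'pref, hP'Q, hP'kj⟩, hmin⟩ := hmu
  intro a b hab hadj
  by_contra hcon
  push_neg at hcon
  obtain ⟨hnPi, hnkj⟩ := hcon
  have hne : a ≠ b := fun he => hP'pref.2.1 a (he ▸ hab)
  have hPiba : Pi b a := by
    rcases pref_tricho hPi a b with h | h | h
    · exact absurd h hne
    · exact absurd h hnPi
    · exact h
  have hnQ : ¬ Q a b := fun hq => hnPi (hPiQ a b hq)
  set R : C → C → Prop := fun x y => (P' x y ∧ ¬ (x = a ∧ y = b)) ∨ (x = b ∧ y = a) with hR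
  have hRpref : IsPref R := by
    refine ⟨?_, ?_, ?_⟩
    · intro x y hxy
      rcases hP'pref.1 x y hxy with h | h
      · by_cases hc : x = a ∧ y = b
        · exact Or.inr (Or.inr ⟨hc.2, hc.1⟩)
        · exact Or.inl (Or.inl ⟨h, hc⟩)
      · by_cases hc : y = a ∧ x = b
        · exact Or.inl (Or.inr ⟨hc.2, hc.1⟩)
        · exact Or.inr (Or.inl ⟨h, hc⟩)
    · intro x hx
      rcases hx with ⟨h, _⟩ | ⟨h1, h2⟩
      · exact hP'pref.2.1 x h
      · exact hne (h2.symm.trans h1)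
    · intro x y z h1 h2
      rcases h1 with ⟨h1, h1'⟩ | ⟨hxb, hya⟩
      · rcases h2 with ⟨h2, h2'⟩ | ⟨hyb, hza⟩
        · have hxz := hP'pref.2.2 x y z h1 h2
          left
          refine ⟨hxz, fun ⟨hxa, hzb⟩ => ?_⟩
          exact hadj y ⟨hxa ▸ h1, hzb ▸ h2⟩
        · -- y = b, z = a
          rw [hyb] at h1
          rw [hza]
          have hxa : x ≠ a := fun he => h1' ⟨he, hyb⟩
          have hP'xa : P' x a := by
            rcases hP'pref.1 x a hxa with h | h
            · exact h
            · exact absurd ⟨h, h1⟩ (hadj x)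
          exact Or.inl ⟨hP'xa, fun hc => hxa hc.1⟩
      · -- x = b, y = a
        rw [hya] at h2
        rw [hxb]
        rcases h2 with ⟨h2, h2'⟩ | ⟨hab', _⟩
        · have hzb : z ≠ b := fun he => h2' ⟨rfl, he⟩
          have hP'bz : P' b z := by
            rcases hP'pref.1 b z (fun he => hzb he.symm) with h | h
            · exact h
            · exact absurd ⟨h2, h⟩ (hadj z)
          exact Or.inl ⟨hP'bz, fun hc => hne hc.1.symm⟩
        · exact absurd hab' hne
  have hRfeas : Feasible Q cj ck R := by
    refine ⟨hRpref, ?_, ?_⟩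
    · intro x y hq
      left
      refine ⟨hP'Q x y hq, fun ⟨hxa, hyb⟩ => hnQ (hxa ▸ hyb ▸ hq)⟩
    · left
      exact ⟨hP'kj, fun hc => hnkj hc.1.symm hc.2.symm⟩
  have hsets : {p : C × C | Pi p.1 p.2 ∧ R p.2 p.1}
      = {p : C × C | Pi p.1 p.2 ∧ P' p.2 p.1} \ {(b, a)} := by
    ext ⟨x, y⟩
    simp only [Set.mem_setOf_eq, Set.mem_diff, Set.mem_singleton_iff, Prod.mk.injEq]
    constructor
    · rintro ⟨hpi, ⟨hp, hnp⟩ | ⟨hyb, hxa⟩⟩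
      · refine ⟨⟨hpi, hp⟩, fun ⟨hxb, hya⟩ => hnp ⟨hya, hxb⟩⟩
      · subst hyb; subst hxa
        exact absurd hpi (pref_asymm hPi hPiba)
    · rintro ⟨⟨hpi, hp⟩, hns⟩
      refine ⟨hpi, Or.inl ⟨hp, fun ⟨hya, hxb⟩ => hns ⟨hxb, hya⟩⟩⟩
  have hmem : ((b, a) : C × C) ∈ {p : C × C | Pi p.1 p.2 ∧ P' p.2 p.1} :=
    ⟨hPiba, hab⟩
  have hlt : dswap Pi R < dswap Pi P' := by
    unfold dswap
    rw [hsets]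
    exact Set.ncard_diff_singleton_lt_of_mem hmem (Set.toFinite _)
  exact absurd (hmin R hRfeas) (by omega)

end Adj
section Inv
variable {C : Type*} [Fintype C]

lemma inv_struct {Q Pi P' : C → C → Prop} (hPi : IsPref Pi) (hPiQ : Extends Pi Q)
    {cj ck : C} (hmu : InMu Q cj ck Pi P') :
    ∀ a b : C, P' a b → Pi b a → (a = ck ∨ P' a ck) ∧ (b = cj ∨ P' cj b) := by
  have hadjlem := adj_swap hPi hPiQ hmu
  have hP'pref := hmu.1.1
  have main : ∀ n : ℕ, ∀ a b : C, ({c | P' a c ∧ P' c b}).ncard ≤ n → P' a b → Pi b a →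
      (a = ck ∨ P' a ck) ∧ (b = cj ∨ P' cj b) := by
    intro n
    induction n with
    | zero =>
      intro a b hn hab hba
      have hE : {c | P' a c ∧ P' c b} = ∅ :=
        (Set.ncard_eq_zero (Set.toFinite _)).mp (Nat.le_zero.mp hn)
      have hadj : ∀ c, ¬ (P' a c ∧ P' c b) := by
        intro c hc
        have : c ∈ {c | P' a c ∧ P' c b} := hc
        rw [hE] at this
        exact this
      rcases hadjlem a b hab hadj with h | ⟨h1, h2⟩
      · exact absurd h (pref_asymm hPi hba)
      · exact ⟨Or.inl h1, Or.inl h2⟩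
    | succ n ih =>
      intro a b hn hab hba
      by_cases hE : {c | P' a c ∧ P' c b} = ∅
      · have hadj : ∀ c, ¬ (P' a c ∧ P' c b) := by
          intro c hc
          have : c ∈ {c | P' a c ∧ P' c b} := hc
          rw [hE] at this
          exact this
        rcases hadjlem a b hab hadj with h | ⟨h1, h2⟩
        · exact absurd h (pref_asymm hPi hba)
        · exact ⟨Or.inl h1, Or.inl h2⟩
      · obtain ⟨c, hc⟩ := Set.nonempty_iff_ne_empty.mpr hE
        obtain ⟨hc1, hc2⟩ : P' a c ∧ P' c b := hc
        have hcmem : c ∈ {x | P' a x ∧ P' x b} := ⟨hc1, hc2⟩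
        have hclt : ({x | P' a x ∧ P' x b} \ {c}).ncard < ({x | P' a x ∧ P' x b}).ncard :=
          Set.ncard_diff_singleton_lt_of_mem hcmem (Set.toFinite _)
        rcases pref_tricho hPi a c with hac | hac | hac
        · exact absurd (hac ▸ hc1) (hP'pref.2.1 a)
        · -- Pi a c : look at c vs b
          rcases pref_tricho hPi c b with hcb | hcb | hcb
          · exact absurd (hcb ▸ hc2) (hP'pref.2.1 c)
          · exact absurd (hPi.2.2 a c b hac hcb) (pref_asymm hPi hba)
          · -- Pi b c : recurse on (c, b)
            have hsub : {x | P' c x ∧ P' x b} ⊆ {x | P' a x ∧ P' x b} \ {c} := by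
              intro x ⟨h1, h2⟩
              exact ⟨⟨hP'pref.2.2 a c x hc1 h1, h2⟩, fun he => hP'pref.2.1 c (he ▸ h1)⟩
            have hcard : ({x | P' c x ∧ P' x b}).ncard ≤ n := by
              have := Set.ncard_le_ncard hsub (Set.toFinite _)
              omega
            obtain ⟨hA, hB⟩ := ih c b hcard hc2 hcb
            refine ⟨?_, hB⟩
            rcases hA with h | h
            · exact Or.inr (h ▸ hc1)
            · exact Or.inr (hP'pref.2.2 a c ck hc1 h)
        · -- Pi c a : recurse on (a, c)
          have hsub : {x | P' a x ∧ P' x c} ⊆ {x | P' a x ∧ P' x b} \ {c} := by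
            intro x ⟨h1, h2⟩
            exact ⟨⟨h1, hP'pref.2.2 x c b h2 hc2⟩, fun he => hP'pref.2.1 x (he ▸ h2)⟩
          have hcard : ({x | P' a x ∧ P' x c}).ncard ≤ n := by
            have := Set.ncard_le_ncard hsub (Set.toFinite _)
            omega
          obtain ⟨hA, hB⟩ := ih a c hcard hc1 hac
          refine ⟨hA, ?_⟩
          rcases hB with h | h
          · exact Or.inr (h ▸ hc2)
          · exact Or.inr (hP'pref.2.2 cj c b h hc2)
  intro a b hab hba
  exact main _ a b le_rfl hab hba

end Inv
open Classical in
/-- Block index of `d` in the coarse decomposition `(S1, ck, cj, S2)` read off from `P'`. -/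
noncomputable def sig {C : Type*} (P' : C → C → Prop) (cj ck : C) (d : C) : ℕ :=
  if d = ck then 1 else if d = cj then 2 else if P' d ck then 0 else 3

section Sigma
variable {C : Type*} [Fintype C]
variable {Q Pi P' : C → C → Prop} {cj ck : C}

lemma basic_facts (hPi : IsPref Pi) (hPiQ : Extends Pi Q)
    (hjk : Pi cj ck) (hmu : InMu Q cj ck Pi P') :
    (∀ d, P' d ck → Pi d ck) ∧ (∀ d, P' cj d → Pi cj d) ∧
      (∀ d, d ≠ ck → d ≠ cj → ¬ P' d ck → P' cj d) := by
  have hP'pref := hmu.1.1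
  have hP'kj := hmu.1.2.2
  have hinv := inv_struct hPi hPiQ hmu
  have hnejk : cj ≠ ck := fun h => hPi.2.1 cj (h ▸ hjk)
  have hF1 : ∀ d, P' d ck → Pi d ck := by
    intro d h
    rcases pref_tricho hPi d ck with he | he | he
    · exact absurd (he ▸ h) (hP'pref.2.1 ck)
    · exact he
    · rcases (hinv d ck h he).2 with h2 | h2
      · exact absurd h2.symm hnejk
      · exact absurd h2 (pref_asymm hP'pref hP'kj)
  have hF2 : ∀ d, P' cj d → Pi cj d := by
    intro d h
    rcases pref_tricho hPi cj d with he | he | he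
    · exact absurd (he ▸ h) (hP'pref.2.1 d)
    · exact he
    · rcases (hinv cj d h he).1 with h2 | h2
      · exact absurd h2 hnejk
      · exact absurd h2 (pref_asymm hP'pref hP'kj)
  have hF3 : ∀ d, P' ck d → P' d cj → False := by
    intro d h1 h2
    have hdk : d ≠ ck := fun he => hP'pref.2.1 ck (he ▸ h1)
    have hdj : d ≠ cj := fun he => hP'pref.2.1 d (he ▸ h2)
    rcases pref_tricho hPi d ck with he | he | he
    · exact absurd he hdk
    · rcases (hinv ck d h1 he).2 with h3 | h3
      · exact absurd h3 hdj
      · exact absurd h3 (pref_asymm hP'pref h2)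
    · have hcjd : Pi cj d := hPi.2.2 cj ck d hjk he
      rcases (hinv d cj h2 hcjd).1 with h3 | h3
      · exact absurd h3 hdk
      · exact absurd h3 (pref_asymm hP'pref h1)
  refine ⟨hF1, hF2, fun d hck hcj h => ?_⟩
  have hckd : P' ck d := by
    rcases hP'pref.1 ck d (fun he => hck he.symm) with h' | h'
    · exact h'
    · exact absurd h' h
  rcases hP'pref.1 cj d (fun he => hcj he.symm) with h' | h'
  · exact h'
  · exact (hF3 d hckd h').elim

lemma sig_cases (P' : C → C → Prop) (cj ck : C) (d : C) :
    (sig P' cj ck d = 1 ∧ d = ck) ∨ (sig P' cj ck d = 2 ∧ d = cj) ∨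
    (sig P' cj ck d = 0 ∧ d ≠ ck ∧ d ≠ cj ∧ P' d ck) ∨
    (sig P' cj ck d = 3 ∧ d ≠ ck ∧ d ≠ cj ∧ ¬ P' d ck) := by
  unfold sig
  split_ifs with h1 h2 h3
  · exact Or.inl ⟨rfl, h1⟩
  · exact Or.inr (Or.inl ⟨rfl, h2⟩)
  · exact Or.inr (Or.inr (Or.inl ⟨rfl, h1, h2, h3⟩))
  · exact Or.inr (Or.inr (Or.inr ⟨rfl, h1, h2, h3⟩))

lemma sig_iff (hPi : IsPref Pi) (hPiQ : Extends Pi Q)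
    (hjk : Pi cj ck) (hmu : InMu Q cj ck Pi P') :
    ∀ a b, P' a b ↔ ordK (sig P' cj ck) Pi a b := by
  have hP'pref := hmu.1.1
  have hP'kj := hmu.1.2.2
  have hinv := inv_struct hPi hPiQ hmu
  obtain ⟨hF1, hF2, hS2cj⟩ := basic_facts hPi hPiQ hjk hmu
  apply pref_ext hP'pref (isPref_ordK hPi _)
  intro a b h
  have hkd : ∀ d : C, d ≠ ck → ¬ P' d ck → P' ck d := by
    intro d h1 h2
    rcases hP'pref.1 ck d (fun he => h1 he.symm) with h' | h'
    · exact h'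
    · exact absurd h' h2
  rcases h with hlt | ⟨heq, hab⟩
  · rcases sig_cases P' cj ck a with ⟨ea, ha⟩ | ⟨ea, ha⟩ | ⟨ea, ha1, ha2, ha3⟩ | ⟨ea, ha1, ha2, ha3⟩ <;>
      rcases sig_cases P' cj ck b with ⟨eb, hb⟩ | ⟨eb, hb⟩ | ⟨eb, hb1, hb2, hb3⟩ | ⟨eb, hb1, hb2, hb3⟩ <;>
      rw [ea, eb] at hlt
    · omega
    · rw [ha, hb]; exact hP'kj
    · omega
    · rw [ha]; exact hkd b hb1 hb3
    · omega
    · omega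
    · omega
    · rw [ha]; exact hS2cj b hb1 hb2 hb3
    · rw [hb]; exact ha3
    · rw [hb]; exact hP'pref.2.2 a ck cj ha3 hP'kj
    · omega
    · exact hP'pref.2.2 a ck b ha3 (hkd b hb1 hb3)
    · omega
    · omega
    · omega
    · omega
  · rcases sig_cases P' cj ck a with ⟨ea, ha⟩ | ⟨ea, ha⟩ | ⟨ea, ha1, ha2, ha3⟩ | ⟨ea, ha1, ha2, ha3⟩ <;>
      rcases sig_cases P' cj ck b with ⟨eb, hb⟩ | ⟨eb, hb⟩ | ⟨eb, hb1, hb2, hb3⟩ | ⟨eb, hb1, hb2, hb3⟩ <;>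
      rw [ea, eb] at heq <;> try omega
    · rw [ha, hb] at hab ⊢; exact absurd hab (hPi.2.1 ck)
    · rw [ha, hb] at hab ⊢; exact absurd hab (hPi.2.1 cj)
    · have hne : a ≠ b := fun he => hPi.2.1 a (he ▸ hab)
      rcases hP'pref.1 a b hne with h' | h'
      · exact h'
      · rcases (hinv b a h' hab).2 with h2 | h2
        · exact absurd h2 ha2
        · exact absurd (hP'pref.2.2 cj a ck h2 ha3) (pref_asymm hP'pref hP'kj)
    · have hne : a ≠ b := fun he => hPi.2.1 a (he ▸ hab)
      rcases hP'pref.1 a b hne with h' | h'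
      · exact h'
      · rcases (hinv b a h' hab).1 with h2 | h2
        · exact absurd h2 hb1
        · exact absurd h2 hb3

end Sigma
section Nobad
variable {C : Type*} [Fintype C]
variable {Q Pi P' : C → C → Prop} {cj ck : C}

omit [Fintype C] in
lemma sig_eval_k : sig P' cj ck ck = 1 := by unfold sig; simp

omit [Fintype C] in
lemma sig_eval_j (h : cj ≠ ck) : sig P' cj ck cj = 2 := by
  unfold sig; rw [if_neg h, if_pos rfl]

omit [Fintype C] in
lemma sig_eval0 {d : C} (h1 : d ≠ ck) (h2 : d ≠ cj) (h3 : P' d ck) : sig P' cj ck d = 0 := by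
  unfold sig; rw [if_neg h1, if_neg h2, if_pos h3]

omit [Fintype C] in
lemma sig_eval3 {d : C} (h1 : d ≠ ck) (h2 : d ≠ cj) (h3 : ¬ P' d ck) : sig P' cj ck d = 3 := by
  unfold sig; rw [if_neg h1, if_neg h2, if_neg h3]

omit [Fintype C] in
lemma sig_le3 (P' : C → C → Prop) (cj ck : C) (d : C) : sig P' cj ck d ≤ 3 := by
  unfold sig; split_ifs <;> omega

lemma nobad (hQ : IsSPO Q) (hPi : IsPref Pi) (hPiQ : Extends Pi Q)
    (hjk : Pi cj ck) (hmu : InMu Q cj ck Pi P') :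
    ∀ b1 b2 : C, Pi cj b1 → Pi b1 ck → ¬ Q cj b1 → ¬ Q b1 ck → ¬ P' b1 ck →
      Pi cj b2 → Pi b2 ck → ¬ Q cj b2 → ¬ Q b2 ck → P' b2 ck → ¬ Pi b1 b2 := by
  classical
  intro b1 b2 hb1j hb1k hb1Qj hb1Qk hb1S hb2j hb2k hb2Qj hb2Qk hb2S hb12
  have hP'pref := hmu.1.1
  have hP'Q := hmu.1.2.1
  have hP'kj := hmu.1.2.2
  have hiff := sig_iff hPi hPiQ hjk hmu
  obtain ⟨hF1, hF2, hS2cj⟩ := basic_facts hPi hPiQ hjk hmu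
  have hnejk : cj ≠ ck := fun h => hPi.2.1 cj (h ▸ hjk)
  set G2 : Set C := {x | Pi cj x ∧ Pi x ck ∧ ¬ Q cj x ∧ ¬ Q x ck ∧ ¬ P' x ck} with hG2
  set G1 : Set C := {x | Pi cj x ∧ Pi x ck ∧ ¬ Q cj x ∧ ¬ Q x ck ∧ P' x ck} with hG1
  obtain ⟨d1, hd1mem, hd1max⟩ := exists_pref_max hPi (S := G2) ⟨b1, hb1j, hb1k, hb1Qj, hb1Qk, hb1S⟩
  obtain ⟨d2, hd2mem, hd2min⟩ := exists_pref_min hPi (S := G1) ⟨b2, hb2j, hb2k, hb2Qj, hb2Qk, hb2S⟩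
  obtain ⟨hd1j, hd1k, hd1Qj, hd1Qk, hd1S⟩ : Pi cj d1 ∧ Pi d1 ck ∧ ¬ Q cj d1 ∧ ¬ Q d1 ck ∧ ¬ P' d1 ck := hd1mem
  obtain ⟨hd2j, hd2k, hd2Qj, hd2Qk, hd2S⟩ : Pi cj d2 ∧ Pi d2 ck ∧ ¬ Q cj d2 ∧ ¬ Q d2 ck ∧ P' d2 ck := hd2mem
  have hd12 : Pi d1 d2 := by
    have h1 : d1 = b1 ∨ Pi d1 b1 := by
      rcases pref_tricho hPi d1 b1 with h | h | h
      · exact Or.inl h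
      · exact Or.inr h
      · exact absurd h (hd1max b1 ⟨hb1j, hb1k, hb1Qj, hb1Qk, hb1S⟩)
    have h2 : b2 = d2 ∨ Pi b2 d2 := by
      rcases pref_tricho hPi b2 d2 with h | h | h
      · exact Or.inl h
      · exact Or.inr h
      · exact absurd h (hd2min b2 ⟨hb2j, hb2k, hb2Qj, hb2Qk, hb2S⟩)
    rcases h1 with rfl | h1 <;> rcases h2 with rfl | h2
    · exact hb12
    · exact hPi.2.2 _ _ _ hb12 h2
    · exact hPi.2.2 _ _ _ h1 hb12
    · exact hPi.2.2 _ _ _ h1 (hPi.2.2 _ _ _ hb12 h2)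
  -- basic disequalities
  have hd1k' : d1 ≠ ck := fun h => hPi.2.1 d1 (by rw [h] at hd1k ⊢; exact hd1k)
  have hd1j' : d1 ≠ cj := fun h => hPi.2.1 cj (by rw [h] at hd1j; exact hd1j)
  have hd2k' : d2 ≠ ck := fun h => hPi.2.1 d2 (by rw [h] at hd2k ⊢; exact hd2k)
  have hd2j' : d2 ≠ cj := fun h => hPi.2.1 cj (by rw [h] at hd2j; exact hd2j)
  have hd12' : d1 ≠ d2 := fun h => hPi.2.1 d1 (h ▸ hd12)
  -- the modified key
  set σ : C → ℕ := sig P' cj ck with hσ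
  set σn : C → ℕ := fun x => if x = d1 then 0 else if x = d2 then 3 else σ x with hσn
  have hσn_d1 : σn d1 = 0 := by rw [hσn]; simp
  have hσn_d2 : σn d2 = 3 := by rw [hσn]; simp [hd12'.symm]
  have hσn_other : ∀ x, x ≠ d1 → x ≠ d2 → σn x = σ x := by
    intro x h1 h2; rw [hσn]; simp [h1, h2]
  have hσn_le3 : ∀ x, σn x ≤ 3 := by
    intro x; rw [hσn]; dsimp only; split_ifs <;> first | omega | exact sig_le3 P' cj ck x
  have hσ_d1 : σ d1 = 3 := sig_eval3 hd1k' hd1j' hd1S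
  have hσ_d2 : σ d2 = 0 := sig_eval0 hd2k' hd2j' hd2S
  -- old feasibility in σ form
  have hold : ∀ a b, Q a b → σ a ≤ σ b := by
    intro a b hq
    rcases (hiff a b).mp (hP'Q a b hq) with h | h
    · exact le_of_lt h
    · exact le_of_eq h.1
  -- R := ordK σn Pi is feasible
  have hRfeas : Feasible Q cj ck (ordK σn Pi) := by
    refine ⟨isPref_ordK hPi σn, ?_, ?_⟩
    · intro a b hq
      have hPiab : Pi a b := hPiQ a b hq
      have hle : σn a ≤ σn b := by
        by_cases hbd1 : b = d1
        · have hq1 : Q a d1 := by rw [← hbd1]; exact hq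
          have hPa1 : Pi a d1 := by rw [← hbd1]; exact hPiab
          have ha1 : a ≠ cj := fun h => hd1Qj (h ▸ hq1)
          have ha2 : a ≠ ck := fun h => (pref_asymm hPi hd1k) (h ▸ hPa1)
          have ha3 : a ≠ d2 := fun h => (pref_asymm hPi hd12) (h ▸ hPa1)
          have ha4 : a ≠ d1 := fun h => hQ.1 d1 (h ▸ hq1)
          have haS : P' a ck := by
            by_contra hno
            exact hd1max a ⟨hF2 a (hS2cj a ha2 ha1 hno), hPi.2.2 _ _ _ hPa1 hd1k,
              fun h => hd1Qj (hQ.2 cj a d1 h hq1), fun h => hno (hP'Q a ck h), hno⟩ hPa1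
          rw [hbd1, hσn_d1, hσn_other a ha4 ha3, hσ, sig_eval0 ha2 ha1 haS]
        · by_cases had2 : a = d2
          · have hq2 : Q d2 b := by rw [← had2]; exact hq
            have hP2b : Pi d2 b := by rw [← had2]; exact hPiab
            have hb1' : b ≠ ck := fun h => hd2Qk (h ▸ hq2)
            have hb2' : b ≠ cj := fun h => (pref_asymm hPi hd2j) (h ▸ hP2b)
            have hb4 : b ≠ d2 := fun h => hQ.1 d2 (h ▸ hq2)
            have hbS : ¬ P' b ck := by
              intro hyes
              refine hd2min b ⟨?_, ?_, ?_, ?_, hyes⟩ hP2b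
              · exact hPi.2.2 _ _ _ hd2j hP2b
              · exact hF1 b hyes
              · intro h
                exact (pref_asymm hP'pref hP'kj) (hP'pref.2.2 cj b ck (hP'Q cj b h) hyes)
              · exact fun h => hd2Qk (hQ.2 d2 b ck hq2 h)
            rw [had2, hσn_d2, hσn_other b hbd1 hb4, hσ, sig_eval3 hb1' hb2' hbS]
          · by_cases had1 : a = d1
            · rw [had1, hσn_d1]; omega
            · by_cases hbd2 : b = d2
              · rw [hbd2, hσn_d2]; exact hσn_le3 a
              · rw [hσn_other a had1 had2, hσn_other b hbd1 hbd2]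
                exact hold a b hq
      rcases lt_or_eq_of_le hle with h | h
      · exact Or.inl h
      · exact Or.inr ⟨h, hPiab⟩
    · left
      have hk : σn ck = 1 := by
        rw [hσn_other ck (Ne.symm hd1k') (Ne.symm hd2k'), hσ, sig_eval_k]
      have hj : σn cj = 2 := by
        rw [hσn_other cj (Ne.symm hd1j') (Ne.symm hd2j'), hσ, sig_eval_j hnejk]
      omega
  -- swap-distance strictly decreases
  have hinvP : {p : C × C | Pi p.1 p.2 ∧ P' p.2 p.1} = {p : C × C | Pi p.1 p.2 ∧ σ p.2 < σ p.1} := by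
    ext ⟨x, y⟩
    simp only [Set.mem_setOf_eq]
    constructor
    · rintro ⟨h1, h2⟩
      rcases (hiff y x).mp h2 with h | h
      · exact ⟨h1, h⟩
      · exact absurd h.2 (pref_asymm hPi h1)
    · rintro ⟨h1, h2⟩
      exact ⟨h1, (hiff y x).mpr (Or.inl h2)⟩
  have hinvR : {p : C × C | Pi p.1 p.2 ∧ ordK σn Pi p.2 p.1}
      = {p : C × C | Pi p.1 p.2 ∧ σn p.2 < σn p.1} := by
    ext ⟨x, y⟩
    simp only [Set.mem_setOf_eq]
    constructor
    · rintro ⟨h1, h2⟩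
      rcases h2 with h | h
      · exact ⟨h1, h⟩
      · exact absurd h.2 (pref_asymm hPi h1)
    · rintro ⟨h1, h2⟩
      exact ⟨h1, Or.inl h2⟩
  set S : Set (C × C) := {p : C × C | Pi p.1 p.2 ∧ σ p.2 < σ p.1} with hS
  set Sn : Set (C × C) := {p : C × C | Pi p.1 p.2 ∧ σn p.2 < σn p.1} with hSn
  set Φ : C × C → C × C := fun p => (if p.1 = d2 then d1 else p.1, if p.2 = d1 then d2 else p.2) with hΦ
  have hSn1 : ∀ p ∈ Sn, p.1 ≠ d1 ∧ p.2 ≠ d2 := by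
    rintro ⟨x, y⟩ ⟨h1, h2⟩
    have h2' : σn y < σn x := h2
    constructor
    · intro h
      have hx : x = d1 := h
      rw [hx, hσn_d1] at h2'; omega
    · intro h
      have hy : y = d2 := h
      rw [hy, hσn_d2] at h2'; have := hσn_le3 x; omega
  have himg : Φ '' Sn ⊆ S \ {(d1, d2)} := by
    rintro ⟨x, y⟩ ⟨⟨a, b⟩, ⟨hPiab', hlt0⟩, heq⟩
    have hPiab : Pi a b := hPiab'
    have hlt : σn b < σn a := hlt0
    obtain ⟨hx1, hy2⟩ := hSn1 (a, b) ⟨hPiab', hlt0⟩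
    simp only [ne_eq] at hx1 hy2
    simp only [hΦ, Prod.mk.injEq] at heq
    obtain ⟨hx, hy⟩ := heq
    by_cases ha : a = d2 <;> by_cases hb : b = d1
    · rw [ha, hb] at hPiab
      exact absurd hPiab (pref_asymm hPi hd12)
    · -- image is (d1, b)
      rw [if_pos ha] at hx; rw [if_neg hb] at hy
      rw [← hx, ← hy]
      have hlt2 : σn b < 3 := by rw [ha, hσn_d2] at hlt; exact hlt
      refine ⟨⟨?_, ?_⟩, ?_⟩
      · show Pi d1 b
        rw [ha] at hPiab
        exact hPi.2.2 _ _ _ hd12 hPiab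
      · show σ b < σ d1
        rw [hσ_d1, ← hσn_other b hb hy2]
        exact hlt2
      · simp only [Set.mem_singleton_iff, Prod.mk.injEq, not_and]
        exact fun _ hc => hy2 hc
    · -- image is (a, d2)
      rw [if_neg ha] at hx; rw [if_pos hb] at hy
      rw [← hx, ← hy]
      have hlt2 : 0 < σn a := by rw [hb, hσn_d1] at hlt; exact hlt
      refine ⟨⟨?_, ?_⟩, ?_⟩
      · show Pi a d2
        rw [hb] at hPiab
        exact hPi.2.2 _ _ _ hPiab hd12
      · show σ d2 < σ a
        rw [hσ_d2, ← hσn_other a hx1 ha]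
        exact hlt2
      · simp only [Set.mem_singleton_iff, Prod.mk.injEq, not_and]
        exact fun hc => absurd hc hx1
    · rw [if_neg ha] at hx; rw [if_neg hb] at hy
      rw [← hx, ← hy]
      refine ⟨⟨hPiab, ?_⟩, ?_⟩
      · show σ b < σ a
        rw [← hσn_other a hx1 ha, ← hσn_other b hb hy2]
        exact hlt
      · simp only [Set.mem_singleton_iff, Prod.mk.injEq, not_and]
        exact fun hc => absurd hc hx1
  have hinj : Set.InjOn Φ Sn := by
    rintro ⟨a, b⟩ hab ⟨a', b'⟩ hab' heq
    obtain ⟨h1, h2⟩ := hSn1 (a, b) hab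
    obtain ⟨h1', h2'⟩ := hSn1 (a', b') hab'
    simp only [hΦ, Prod.mk.injEq] at heq
    obtain ⟨hx, hy⟩ := heq
    have hxx : a = a' := by
      by_cases ha : a = d2 <;> by_cases ha' : a' = d2
      · rw [ha, ha']
      · rw [if_pos ha, if_neg ha'] at hx; exact absurd hx.symm h1'
      · rw [if_neg ha, if_pos ha'] at hx; exact absurd hx h1
      · rwa [if_neg ha, if_neg ha'] at hx
    have hyy : b = b' := by
      by_cases hb : b = d1 <;> by_cases hb' : b' = d1
      · rw [hb, hb']
      · rw [if_pos hb, if_neg hb'] at hy; exact absurd hy.symm h2'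
      · rw [if_neg hb, if_pos hb'] at hy; exact absurd hy h2
      · rwa [if_neg hb, if_neg hb'] at hy
    rw [hxx, hyy]
  have hmemS : ((d1, d2) : C × C) ∈ S := ⟨hd12, by show σ d2 < σ d1; rw [hσ_d1, hσ_d2]; omega⟩
  have hcount : Sn.ncard < S.ncard := by
    have h1 : Sn.ncard = (Φ '' Sn).ncard := (Set.ncard_image_of_injOn hinj).symm
    have h2 : (Φ '' Sn).ncard ≤ (S \ {(d1, d2)}).ncard :=
      Set.ncard_le_ncard himg (Set.toFinite _)
    have h3 : (S \ {(d1, d2)}).ncard < S.ncard :=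
      Set.ncard_diff_singleton_lt_of_mem hmemS (Set.toFinite _)
    omega
  have hle := hmu.2 (ordK σn Pi) hRfeas
  have hdP : dswap Pi P' = S.ncard := by unfold dswap; rw [hinvP]
  have hdR : dswap Pi (ordK σn Pi) = Sn.ncard := by unfold dswap; rw [hinvR]
  omega

end Nobad
section Blk
variable {C : Type*} {Q Pi : C → C → Prop} {cj ck z d : C}

lemma blk_eq0 (h : Pi d z ∧ ¬ (d = cj ∨ Q cj d)) : blk Q Pi cj ck z d = 0 := by
  unfold blk; rw [if_pos h]

lemma blk_eq1 (h0 : ¬ (Pi d z ∧ ¬ (d = cj ∨ Q cj d))) (h1 : (d = z ∨ Pi z d) ∧ Q d ck) :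
    blk Q Pi cj ck z d = 1 := by
  unfold blk; rw [if_neg h0, if_pos h1]

lemma blk_eq4 (h0 : ¬ (Pi d z ∧ ¬ (d = cj ∨ Q cj d))) (h1 : ¬ ((d = z ∨ Pi z d) ∧ Q d ck))
    (h2 : d ≠ ck) (h3 : d ≠ cj) (h4 : Pi d z ∧ Q cj d) : blk Q Pi cj ck z d = 4 := by
  unfold blk; rw [if_neg h0, if_neg h1, if_neg h2, if_neg h3, if_pos h4]

lemma blk_eq5 (h0 : ¬ (Pi d z ∧ ¬ (d = cj ∨ Q cj d))) (h1 : ¬ ((d = z ∨ Pi z d) ∧ Q d ck))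
    (h2 : d ≠ ck) (h3 : d ≠ cj) (h4 : ¬ (Pi d z ∧ Q cj d))
    (h5 : (d = z ∨ Pi z d) ∧ ¬ (d = ck ∨ Q d ck)) : blk Q Pi cj ck z d = 5 := by
  unfold blk; rw [if_neg h0, if_neg h1, if_neg h2, if_neg h3, if_neg h4, if_pos h5]

lemma blk0_elim (h : blk Q Pi cj ck z d = 0) : Pi d z := by
  unfold blk at h; split_ifs at h with h1 h2 h3 h4 h5 h6 <;> first | exact h1.1 | omega

lemma blk1_elim (h : blk Q Pi cj ck z d = 1) : d = z ∨ Pi z d := by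
  unfold blk at h; split_ifs at h with h1 h2 h3 h4 h5 h6 <;> first | exact h2.1 | omega

lemma blk4_elim (h : blk Q Pi cj ck z d = 4) : Pi d z := by
  unfold blk at h; split_ifs at h with h1 h2 h3 h4 h5 h6 <;> first | exact h5.1 | omega

lemma blk5_elim (h : blk Q Pi cj ck z d = 5) : d = z ∨ Pi z d := by
  unfold blk at h; split_ifs at h with h1 h2 h3 h4 h5 h6 <;> first | exact h6.1 | omega

lemma blk_ck (hQ : IsSPO Q) (hPi : IsPref Pi) (hseg : z ∈ seg Pi cj ck) :
    blk Q Pi cj ck z ck = 2 := by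
  have h0 : ¬ (Pi ck z ∧ ¬ (ck = cj ∨ Q cj ck)) := by
    rintro ⟨h, -⟩
    rcases hseg.2 with he | h'
    · rw [he] at h; exact hPi.2.1 ck h
    · exact pref_asymm hPi h' h
  have h1 : ¬ ((ck = z ∨ Pi z ck) ∧ Q ck ck) := fun hc => hQ.1 ck hc.2
  unfold blk; rw [if_neg h0, if_neg h1, if_pos rfl]

lemma blk_cj (hPi : IsPref Pi) (hjk : Pi cj ck) (hQjk : ¬ Q cj ck) :
    blk Q Pi cj ck z cj = 3 := by
  have hne : cj ≠ ck := fun h => hPi.2.1 cj (h ▸ hjk)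
  have h0 : ¬ (Pi cj z ∧ ¬ (cj = cj ∨ Q cj cj)) := fun hc => hc.2 (Or.inl rfl)
  have h1 : ¬ ((cj = z ∨ Pi z cj) ∧ Q cj ck) := fun hc => hQjk hc.2
  unfold blk; rw [if_neg h0, if_neg h1, if_neg hne, if_pos rfl]

end Blk
theorem statement12 {C : Type*} [Fintype C]
    (Q : C → C → Prop) (hQ : IsSPO Q)
    (Pi : C → C → Prop) (hPi : IsPref Pi) (hPiQ : Extends Pi Q)
    (cj ck : C) (hjk : Pi cj ck) (hQjk : ¬ Q cj ck) (hQkj : ¬ Q ck cj)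
    (P' : C → C → Prop) (hmu : InMu Q cj ck Pi P') :
    ∃ z : C, z ∈ seg Pi cj ck ∧
      ∀ a b : C, P' a b ↔
        (blk Q Pi cj ck z a < blk Q Pi cj ck z b ∨
          (blk Q Pi cj ck z a = blk Q Pi cj ck z b ∧ Pi a b)) := by
  classical
  have hP'pref := hmu.1.1
  have hP'Q := hmu.1.2.1
  have hP'kj := hmu.1.2.2
  have hiff := sig_iff hPi hPiQ hjk hmu
  obtain ⟨hF1, hF2, hS2cj⟩ := basic_facts hPi hPiQ hjk hmu
  have hNB := nobad hQ hPi hPiQ hjk hmu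
  have hnejk : cj ≠ ck := fun h => hPi.2.1 cj (h ▸ hjk)
  have hnotQcj : ∀ d, P' d ck → ¬ Q cj d := by
    intro d h hq
    exact pref_asymm hP'pref hP'kj (hP'pref.2.2 cj d ck (hP'Q cj d hq) h)
  have hnotQk : ∀ d, ¬ P' d ck → ¬ Q d ck := fun d h hq => h (hP'Q d ck hq)
  suffices hKey : ∃ z, z ∈ seg Pi cj ck ∧
      (∀ d, d ≠ ck → d ≠ cj → P' d ck → blk Q Pi cj ck z d = 0 ∨ blk Q Pi cj ck z d = 1) ∧
      (∀ d, d ≠ ck → d ≠ cj → ¬ P' d ck →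
        blk Q Pi cj ck z d = 4 ∨ blk Q Pi cj ck z d = 5) by
    obtain ⟨z, hzseg, hA, hB⟩ := hKey
    refine ⟨z, hzseg, ?_⟩
    have hcls : ∀ d,
        (blk Q Pi cj ck z d = 0 ∧ sig P' cj ck d = 0) ∨
        (blk Q Pi cj ck z d = 1 ∧ sig P' cj ck d = 0) ∨
        (blk Q Pi cj ck z d = 2 ∧ sig P' cj ck d = 1) ∨
        (blk Q Pi cj ck z d = 3 ∧ sig P' cj ck d = 2) ∨
        (blk Q Pi cj ck z d = 4 ∧ sig P' cj ck d = 3) ∨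
        (blk Q Pi cj ck z d = 5 ∧ sig P' cj ck d = 3) := by
      intro d
      rcases sig_cases P' cj ck d with ⟨e, hd⟩ | ⟨e, hd⟩ | ⟨e, h1, h2, h3⟩ | ⟨e, h1, h2, h3⟩
      · rw [hd] at e ⊢
        exact Or.inr (Or.inr (Or.inl ⟨blk_ck hQ hPi hzseg, e⟩))
      · rw [hd] at e ⊢
        exact Or.inr (Or.inr (Or.inr (Or.inl ⟨blk_cj hPi hjk hQjk, e⟩)))
      · rcases hA d h1 h2 h3 with h | h
        · exact Or.inl ⟨h, e⟩
        · exact Or.inr (Or.inl ⟨h, e⟩)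
      · rcases hB d h1 h2 h3 with h | h
        · exact Or.inr (Or.inr (Or.inr (Or.inr (Or.inl ⟨h, e⟩))))
        · exact Or.inr (Or.inr (Or.inr (Or.inr (Or.inr ⟨h, e⟩))))
    have hsep01 : ∀ a b, blk Q Pi cj ck z a = 0 → blk Q Pi cj ck z b = 1 → Pi a b := by
      intro a b h0 h1
      rcases blk1_elim h1 with he | he
      · rw [he]; exact blk0_elim h0
      · exact hPi.2.2 _ _ _ (blk0_elim h0) he
    have hsep45 : ∀ a b, blk Q Pi cj ck z a = 4 → blk Q Pi cj ck z b = 5 → Pi a b := by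
      intro a b h0 h1
      rcases blk5_elim h1 with he | he
      · rw [he]; exact blk4_elim h0
      · exact hPi.2.2 _ _ _ (blk4_elim h0) he
    have hincl : ∀ a b, ordK (blk Q Pi cj ck z) Pi a b → P' a b := by
      intro a b h
      apply (hiff a b).mpr
      rcases h with hlt | ⟨heq, hab⟩
      · rcases hcls a with ⟨ea, fa⟩ | ⟨ea, fa⟩ | ⟨ea, fa⟩ | ⟨ea, fa⟩ | ⟨ea, fa⟩ | ⟨ea, fa⟩ <;>
          rcases hcls b with ⟨eb, fb⟩ | ⟨eb, fb⟩ | ⟨eb, fb⟩ | ⟨eb, fb⟩ | ⟨eb, fb⟩ | ⟨eb, fb⟩ <;>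
          first
            | exact Or.inr ⟨by omega, hsep01 a b ea eb⟩
            | exact Or.inr ⟨by omega, hsep45 a b ea eb⟩
            | exact Or.inl (by omega)
      · refine Or.inr ⟨?_, hab⟩
        rcases hcls a with ⟨ea, fa⟩ | ⟨ea, fa⟩ | ⟨ea, fa⟩ | ⟨ea, fa⟩ | ⟨ea, fa⟩ | ⟨ea, fa⟩ <;>
          rcases hcls b with ⟨eb, fb⟩ | ⟨eb, fb⟩ | ⟨eb, fb⟩ | ⟨eb, fb⟩ | ⟨eb, fb⟩ | ⟨eb, fb⟩ <;>
          omega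
    exact pref_ext hP'pref (isPref_ordK hPi (blk Q Pi cj ck z)) hincl
  -- construct the pivot z
  by_cases hT : ({x | Pi cj x ∧ Pi x ck ∧ ¬ Q cj x ∧ ¬ Q x ck ∧ ¬ P' x ck} : Set C).Nonempty
  · obtain ⟨z, hzmem, hzmax⟩ := exists_pref_max hPi hT
    obtain ⟨hz1, hz2, hz3, hz4, hz5⟩ :
        Pi cj z ∧ Pi z ck ∧ ¬ Q cj z ∧ ¬ Q z ck ∧ ¬ P' z ck := hzmem
    refine ⟨z, ⟨Or.inr hz1, Or.inr hz2⟩, ?_, ?_⟩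
    · intro d hdk hdj hdS
      have hQcjd : ¬ Q cj d := hnotQcj d hdS
      have hPidk : Pi d ck := hF1 d hdS
      by_cases hQdk : Q d ck
      · by_cases hPidz : Pi d z
        · exact Or.inl (blk_eq0 ⟨hPidz, fun hc => hc.elim hdj hQcjd⟩)
        · right
          apply blk_eq1 (fun hc => hPidz hc.1)
          refine ⟨?_, hQdk⟩
          rcases pref_tricho hPi d z with he | he | he
          · exact Or.inl he
          · exact absurd he hPidz
          · exact Or.inr he
      · have hPidz : Pi d z := by
          rcases pref_tricho hPi cj d with he | he | he
          · exact absurd he.symm hdj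
          · rcases pref_tricho hPi d z with h' | h' | h'
            · rw [h'] at hdS; exact absurd hdS hz5
            · exact h'
            · exact absurd h' (hNB z d hz1 hz2 hz3 hz4 hz5 he hPidk hQcjd hQdk hdS)
          · exact hPi.2.2 _ _ _ he hz1
        exact Or.inl (blk_eq0 ⟨hPidz, fun hc => hc.elim hdj hQcjd⟩)
    · intro d hdk hdj hdS
      have hQdk : ¬ Q d ck := hnotQk d hdS
      have hPicjd : Pi cj d := hF2 d (hS2cj d hdk hdj hdS)
      rcases pref_tricho hPi d ck with he | he | he
      · exact absurd he hdk
      · by_cases hQcjd : Q cj d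
        · by_cases hPidz : Pi d z
          · exact Or.inl (blk_eq4 (fun hc => hc.2 (Or.inr hQcjd)) (fun hc => hQdk hc.2)
              hdk hdj ⟨hPidz, hQcjd⟩)
          · right
            apply blk_eq5 (fun hc => hPidz hc.1) (fun hc => hQdk hc.2) hdk hdj
              (fun hc => hPidz hc.1)
            refine ⟨?_, fun hc => hc.elim hdk hQdk⟩
            rcases pref_tricho hPi d z with h' | h' | h'
            · exact Or.inl h'
            · exact absurd h' hPidz
            · exact Or.inr h'
        · have hmax : ¬ Pi d z := hzmax d ⟨hPicjd, he, hQcjd, hQdk, hdS⟩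
          right
          apply blk_eq5 (fun hc => hmax hc.1) (fun hc => hQdk hc.2) hdk hdj
            (fun hc => hmax hc.1)
          refine ⟨?_, fun hc => hc.elim hdk hQdk⟩
          rcases pref_tricho hPi d z with h' | h' | h'
          · exact Or.inl h'
          · exact absurd h' hmax
          · exact Or.inr h'
      · have hPidz : ¬ Pi d z := fun h => pref_asymm hPi he (hPi.2.2 _ _ _ h hz2)
        right
        apply blk_eq5 (fun hc => hPidz hc.1) (fun hc => hQdk hc.2) hdk hdj
          (fun hc => hPidz hc.1)
        refine ⟨?_, fun hc => hc.elim hdk hQdk⟩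
        rcases pref_tricho hPi d z with h' | h' | h'
        · exact Or.inl h'
        · exact absurd h' hPidz
        · exact Or.inr h'
  · have hTe : ∀ x, Pi cj x → Pi x ck → ¬ Q cj x → ¬ Q x ck → P' x ck := by
      intro x h1 h2 h3 h4
      by_contra h5
      exact hT ⟨x, h1, h2, h3, h4, h5⟩
    refine ⟨ck, ⟨Or.inr hjk, Or.inl rfl⟩, ?_, ?_⟩
    · intro d hdk hdj hdS
      exact Or.inl (blk_eq0 ⟨hF1 d hdS, fun hc => hc.elim hdj (hnotQcj d hdS)⟩)
    · intro d hdk hdj hdS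
      have hQdk : ¬ Q d ck := hnotQk d hdS
      have hPicjd : Pi cj d := hF2 d (hS2cj d hdk hdj hdS)
      rcases pref_tricho hPi d ck with he | he | he
      · exact absurd he hdk
      · have hQcjd : Q cj d := by
          by_contra h'
          exact hdS (hTe d hPicjd he h' hQdk)
        exact Or.inl (blk_eq4 (fun hc => hc.2 (Or.inr hQcjd)) (fun hc => hQdk hc.2)
          hdk hdj ⟨he, hQcjd⟩)
      · right
        apply blk_eq5 (fun hc => (pref_asymm hPi he) hc.1) (fun hc => hQdk hc.2) hdk hdj
          (fun hc => (pref_asymm hPi he) hc.1)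
        exact ⟨Or.inr he, fun hc => hc.elim hdk hQdk⟩
end

section
/- Let C be a finite set of candidates, PW ⊆ C a nonempty set of possible winners, and P_i a preference order on C. Let c_j, c_k ∈ PW be two possible winners with P_i(c_j,c_k) (a safe query). Then no preference order P' on C with P'(c_k,c_j) locally dominates P_i (given PW); consequently, a voter queried on the pair (c_j,c_k) answers c_j ≻ c_k according to her current preference order P_i and does not change it. -/
/-- The Borda score that preference order `P` gives candidate `c`. -/
noncomputable def borda {C : Type*} [Fintype C] (P : C → C → Prop) (c : C) : ℕ :=
  1 + Set.ncard {c' : C | P c c'}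

/-- `c` is the outcome `F(s, P)`: it beats every other candidate either in total score
`s + borda`, or on equal total score by the tie-breaking order `tb`. -/
def IsWinner {C : Type*} [Fintype C] (tb : C → C → Prop) (s : C → ℕ)
    (P : C → C → Prop) (c : C) : Prop :=
  ∀ c' : C, c' ≠ c →
    s c' + borda P c' < s c + borda P c ∨
      (s c' + borda P c' = s c + borda P c ∧ tb c c')

/-- `s` is a possible world for the set `PW` of possible winners. -/
def PossibleWorld {C : Type*} [Fintype C] (tb : C → C → Prop) (PW : Set C)
    (s : C → ℕ) : Prop :=
  ∀ R : C → C → Prop, IsPref R → ∀ c : C, IsWinner tb s R c → c ∈ PW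

/-- `P'` locally dominates `P` given the possible-winner set `PW`. -/
def LocDom {C : Type*} [Fintype C] (tb : C → C → Prop) (PW : Set C)
    (P' P : C → C → Prop) : Prop :=
  (∀ s : C → ℕ, PossibleWorld tb PW s →
      ∀ w' w : C, IsWinner tb s P' w' → IsWinner tb s P w → w' = w ∨ P w' w) ∧
  ∃ s : C → ℕ, PossibleWorld tb PW s ∧
      ∃ w' w : C, IsWinner tb s P' w' ∧ IsWinner tb s P w ∧ P w' w

lemma borda_pos {C : Type*} [Fintype C] (P : C → C → Prop) (c : C) :
    1 ≤ borda P c := by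
  unfold borda; omega

lemma borda_le_card {C : Type*} [Fintype C] {P : C → C → Prop} (hP : IsPref P)
    (a : C) : borda P a ≤ Fintype.card C := by
  unfold borda
  have hss : {c' : C | P a c'} ⊂ Set.univ := by
    refine ⟨Set.subset_univ _, fun h => ?_⟩
    exact hP.2.1 a (h (Set.mem_univ a))
  have := Set.ncard_lt_ncard hss Set.finite_univ
  rw [Set.ncard_univ, Nat.card_eq_fintype_card] at this
  omega

lemma borda_lt_of_pref {C : Type*} [Fintype C] {P : C → C → Prop} (hP : IsPref P)
    {a b : C} (h : P a b) : borda P b < borda P a := by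
  unfold borda
  have hss : {c' : C | P b c'} ⊂ {c' : C | P a c'} := by
    refine ⟨fun x hx => hP.2.2 a b x h hx, fun hsub => ?_⟩
    exact hP.2.1 b (hsub (show b ∈ {c' : C | P a c'} from h))
  have := Set.ncard_lt_ncard hss (Set.toFinite _)
  omega

theorem statement13 {C : Type*} [Fintype C]
    (tb : C → C → Prop) (htb : IsPref tb)
    (PW : Set C) (hPW : PW.Nonempty)
    (Pi : C → C → Prop) (hPi : IsPref Pi)
    (cj ck : C) (hcj : cj ∈ PW) (hck : ck ∈ PW) (hjk : Pi cj ck) :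
    ∀ P' : C → C → Prop, IsPref P' → P' ck cj → ¬ LocDom tb PW P' Pi := by
  classical
  intro P' hP' hkj hLD
  obtain ⟨hweak, _⟩ := hLD
  set n := Fintype.card C with hn
  have hne : cj ≠ ck := by rintro rfl; exact hPi.2.1 cj hjk
  set s : C → ℕ := fun c => if c = cj ∨ c = ck then n else 0 with hs
  have hscj : s cj = n := by simp [hs]
  have hsck : s ck = n := by simp [hs]
  have hsother : ∀ c, c ≠ cj → c ≠ ck → s c = 0 := by
    intro c h1 h2; simp [hs, h1, h2]
  -- Winner under Pi is cj
  have hWj : IsWinner tb s Pi cj := by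
    intro c' hc'
    by_cases hck' : c' = ck
    · subst hck'
      left
      rw [hscj, hsck]
      have := borda_lt_of_pref hPi hjk
      omega
    · left
      rw [hscj, hsother c' hc' hck']
      have h1 := borda_le_card hPi c'
      have h2 := borda_pos Pi cj
      omega
  -- Winner under P' is ck
  have hWk : IsWinner tb s P' ck := by
    intro c' hc'
    by_cases hcj' : c' = cj
    · subst hcj'
      left
      rw [hscj, hsck]
      have := borda_lt_of_pref hP' hkj
      omega
    · left
      rw [hsck, hsother c' hcj' hc']
      have h1 := borda_le_card hP' c'
      have h2 := borda_pos P' ck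
      omega
  -- s is a possible world
  have hPWs : PossibleWorld tb PW s := by
    intro R hR c hc
    by_contra hcn
    have hc1 : c ≠ cj := by rintro rfl; exact hcn hcj
    have hc2 : c ≠ ck := by rintro rfl; exact hcn hck
    have := hc cj (Ne.symm hc1)
    rw [hscj, hsother c hc1 hc2] at this
    have h1 := borda_le_card hR c
    have h2 := borda_pos R cj
    omega
  rcases hweak s hPWs ck cj hWk hWj with h | h
  · exact hne h.symm
  · exact hPi.2.1 cj (hPi.2.2 cj ck cj hjk h)
end
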